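/- Let d ≥ 2 be an integer and let m be a nonzero integer. Then the number of pairs (x,y) ∈ ℤ² with x^d − y^d = m is at most 2·(d−1)·τ(|m|), where τ(|m|) denotes the number of positive divisors of |m|. In particular, for every ε > 0 there is a constant K (depending only on d and ε) such that this number of pairs is at most K·|m|^ε. -/

import Mathlib

open Real Polynomial Finset


lemma pointwise_bound (ε : ℝ) (hε : 0 < ε) :
    ∃ C : ℝ, 1 ≤ C ∧ ∀ a : ℕ, (a + 1 : ℝ) ≤ C * (2 : ℝ) ^ ((a : ℝ) * ε) := by
  refine ⟨max 1 (2 / (ε * Real.log 2)), le_max_left _ _, fun a => ?_⟩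
  have hlog : 0 < Real.log 2 := Real.log_pos one_lt_two
  rcases Nat.eq_zero_or_pos a with rfl | ha
  · simp [Real.rpow_natCast]
  · have h1 : (a : ℝ) * ε * Real.log 2 ≤ (2:ℝ) ^ ((a : ℝ) * ε) := by
      rw [Real.rpow_def_of_pos two_pos]
      calc (a : ℝ) * ε * Real.log 2 = Real.log 2 * ((a:ℝ) * ε) := by ring
        _ ≤ Real.exp (Real.log 2 * ((a:ℝ)*ε)) := by
            linarith [Real.add_one_le_exp (Real.log 2 * ((a:ℝ)*ε))]
    have ha1 : (1:ℝ) ≤ a := by exact_mod_cast ha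
    have h2 : (a + 1 : ℝ) ≤ 2 * a := by linarith
    have hpos : 0 < ε * Real.log 2 := by positivity
    calc (a + 1 : ℝ) ≤ 2 * a := h2
      _ = (2 / (ε * Real.log 2)) * ((a:ℝ) * ε * Real.log 2) := by field_simp
      _ ≤ (2 / (ε * Real.log 2)) * ((2:ℝ) ^ ((a:ℝ) * ε)) := by
          apply mul_le_mul_of_nonneg_left h1 (by positivity)
      _ ≤ max 1 (2 / (ε * Real.log 2)) * (2:ℝ) ^ ((a:ℝ)*ε) := by
          apply mul_le_mul_of_nonneg_right (le_max_right _ _) (by positivity)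

lemma divisor_bound (ε : ℝ) (hε : 0 < ε) :
    ∃ K : ℝ, 0 ≤ K ∧ ∀ n : ℕ, n ≠ 0 → (n.divisors.card : ℝ) ≤ K * (n : ℝ) ^ ε := by
  obtain ⟨C, hC1, hC⟩ := pointwise_bound ε hε
  have hC0 : 0 ≤ C := le_trans zero_le_one hC1
  set B : ℕ := ⌈(2:ℝ) ^ (1/ε)⌉₊ with hB
  refine ⟨C ^ B, by positivity, fun n hn => ?_⟩
  have hτ : (n.divisors.card : ℝ) =
      ∏ p ∈ n.primeFactors, ((n.factorization p : ℝ) + 1) := by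
    rw [Nat.card_divisors hn]; push_cast; rfl
  have hnε : (n : ℝ) ^ ε =
      ∏ p ∈ n.primeFactors, (p : ℝ) ^ ((n.factorization p : ℝ) * ε) := by
    conv_lhs => rw [← Nat.factorization_prod_pow_eq_self hn]
    rw [Nat.prod_factorization_eq_prod_primeFactors]
    push_cast
    rw [← Real.finset_prod_rpow _ _ (fun p hp => by positivity) ε]
    refine Finset.prod_congr rfl fun p hp => ?_
    have hp2 : (0:ℝ) ≤ p := by positivity
    rw [← Real.rpow_natCast (p:ℝ) (n.factorization p), ← Real.rpow_mul hp2]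
  have key : ∀ p ∈ n.primeFactors,
      ((n.factorization p : ℝ) + 1) ≤
        (if p < B then C else 1) * (p : ℝ) ^ ((n.factorization p : ℝ) * ε) := by
    intro p hp
    have hpp : p.Prime := Nat.prime_of_mem_primeFactors hp
    have hp2 : (2:ℝ) ≤ p := by exact_mod_cast hpp.two_le
    set a := n.factorization p
    by_cases hcase : p < B
    · simp only [if_pos hcase]
      calc ((a:ℝ) + 1) ≤ C * (2:ℝ) ^ ((a:ℝ) * ε) := hC a
        _ ≤ C * (p:ℝ) ^ ((a:ℝ) * ε) := by
            apply mul_le_mul_of_nonneg_left _ hC0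
            exact Real.rpow_le_rpow (by norm_num) hp2 (by positivity)
    · simp only [if_neg hcase, one_mul]
      have hpB : ((2:ℝ) ^ (1/ε)) ≤ p := le_trans (Nat.le_ceil _) (by exact_mod_cast not_lt.mp hcase)
      have h2p : (2:ℝ) ≤ (p:ℝ) ^ ε := by
        calc (2:ℝ) = ((2:ℝ) ^ (1/ε)) ^ ε := by
              rw [← Real.rpow_mul (by norm_num), one_div, inv_mul_cancel₀ hε.ne', Real.rpow_one]
          _ ≤ (p:ℝ) ^ ε := Real.rpow_le_rpow (by positivity) hpB hε.le
      calc ((a:ℝ) + 1) ≤ 2 ^ a := by exact_mod_cast (Nat.lt_two_pow_self (n := a))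
        _ ≤ ((p:ℝ) ^ ε) ^ a := pow_le_pow_left₀ (by norm_num) h2p a
        _ = (p:ℝ) ^ ((a:ℝ) * ε) := by
            rw [← Real.rpow_natCast ((p:ℝ)^ε) a, ← Real.rpow_mul (by positivity), mul_comm]
  calc (n.divisors.card : ℝ)
      = ∏ p ∈ n.primeFactors, ((n.factorization p : ℝ) + 1) := hτ
    _ ≤ ∏ p ∈ n.primeFactors,
          (if p < B then C else 1) * (p : ℝ) ^ ((n.factorization p : ℝ) * ε) :=
        Finset.prod_le_prod (fun p _ => by positivity) key
    _ = (∏ p ∈ n.primeFactors, (if p < B then C else 1)) *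
          ∏ p ∈ n.primeFactors, (p : ℝ) ^ ((n.factorization p : ℝ) * ε) :=
        Finset.prod_mul_distrib
    _ ≤ C ^ B * (n:ℝ) ^ ε := by
        rw [← hnε]
        apply mul_le_mul_of_nonneg_right _ (by positivity)
        rw [← Finset.prod_filter]
        rw [Finset.prod_const]
        have hcard : (n.primeFactors.filter (· < B)).card ≤ B := by
          have : n.primeFactors.filter (· < B) ⊆ Finset.range B := by
            intro p hp
            simp only [Finset.mem_filter] at hp
            exact Finset.mem_range.mpr hp.2
          simpa using Finset.card_le_card this
        exact pow_le_pow_right₀ hC1 hcard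


lemma count_main (d : ℕ) (hd : 2 ≤ d) (m : ℤ) (hm : m ≠ 0) :
    ({p : ℤ × ℤ | p.1 ^ d - p.2 ^ d = m}).Finite ∧
    ({p : ℤ × ℤ | p.1 ^ d - p.2 ^ d = m}).ncard ≤
      2 * (d - 1) * m.natAbs.divisors.card := by
  classical
  set P : ℤ → ℤ[X] := fun a => (X + C a) ^ d - X ^ d - C m with hP
  have hdeg : ∀ a : ℤ, (P a).natDegree ≤ d - 1 := by
    intro a
    have h1 : ((X + C a) ^ d - X ^ d : ℤ[X]).degree < d := by
      have hmonic : ((X + C a : ℤ[X]) ^ d).Monic := (monic_X_add_C a).pow d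
      have hmonic2 : ((X : ℤ[X]) ^ d).Monic := monic_X_pow d
      have hdeg1 : ((X + C a : ℤ[X]) ^ d).degree = d := by
        rw [degree_pow, degree_X_add_C]; simp
      have hdeg2 : ((X : ℤ[X]) ^ d).degree = d := by
        rw [degree_X_pow]
      have := degree_sub_lt (hdeg1.trans hdeg2.symm) (hmonic.ne_zero)
        (by rw [hmonic.leadingCoeff, hmonic2.leadingCoeff])
      rwa [hdeg1] at this
    have h2 : (P a).degree < d := by
      rw [hP]
      simp only
      apply lt_of_le_of_lt (degree_sub_le _ _)
      apply max_lt h1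
      apply lt_of_le_of_lt (degree_C_le)
      exact_mod_cast (by omega : 0 < d)
    by_cases hz : P a = 0
    · simp [hz]
    · have := (natDegree_lt_iff_degree_lt hz).mpr (by exact_mod_cast h2)
      omega
  have hne : ∀ a : ℤ, a ≠ 0 → P a ≠ 0 := by
    intro a ha hz
    have hco : (P a).coeff (d - 1) = d * a := by
      rw [hP]
      simp only
      rw [coeff_sub, coeff_sub, coeff_X_add_C_pow]
      have h1 : d - (d - 1) = 1 := by omega
      have h2 : ((X : ℤ[X]) ^ d).coeff (d - 1) = 0 := by
        rw [coeff_X_pow]; simp; omega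
      have h3 : (C m : ℤ[X]).coeff (d - 1) = 0 := by
        rw [coeff_C]; simp; omega
      rw [h1, h2, h3]
      have h4 : d.choose (d - 1) = d := by
        have h5 : d - 1 = d - 1 := rfl
        calc d.choose (d - 1) = d.choose 1 := Nat.choose_symm (by omega : 1 ≤ d)
          _ = d := Nat.choose_one_right d
      rw [h4]; push_cast; ring
    rw [hz] at hco
    simp at hco
    rcases hco with h | h
    · omega
    · exact ha h
  -- root finsets
  set R : ℤ → Finset ℤ := fun a => (P a).roots.toFinset with hR
  have hRcard : ∀ a : ℤ, (R a).card ≤ d - 1 := fun a =>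
    le_trans (Multiset.toFinset_card_le _) (le_trans (Polynomial.card_roots' _) (hdeg a))
  set D : Finset ℤ := m.natAbs.divisors.image (fun n : ℕ => (n : ℤ)) ∪
      m.natAbs.divisors.image (fun n : ℕ => -(n : ℤ)) with hD
  have hDcard : D.card ≤ 2 * m.natAbs.divisors.card := by
    apply le_trans (Finset.card_union_le _ _)
    have h1 := Finset.card_image_le (s := m.natAbs.divisors) (f := fun n : ℕ => (n : ℤ))
    have h2 := Finset.card_image_le (s := m.natAbs.divisors) (f := fun n : ℕ => -(n : ℤ))
    omega
  set T : Finset (ℤ × ℤ) := D.biUnion (fun a => (R a).image (fun y => (y + a, y))) with hT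
  have hsub : {p : ℤ × ℤ | p.1 ^ d - p.2 ^ d = m} ⊆ ↑T := by
    rintro ⟨x, y⟩ hxy
    simp only [Set.mem_setOf_eq] at hxy
    set a := x - y with ha
    have hdvd : a ∣ m := hxy ▸ sub_dvd_pow_sub_pow x y d
    have ha0 : a ≠ 0 := by
      rintro h
      have hxy' : x = y := by omega
      rw [hxy'] at hxy
      simp at hxy
      exact hm hxy.symm
    have haD : a ∈ D := by
      have hmem : a.natAbs ∈ m.natAbs.divisors :=
        Nat.mem_divisors.mpr ⟨Int.natAbs_dvd_natAbs.mpr hdvd, Int.natAbs_ne_zero.mpr hm⟩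
      rcases Int.natAbs_eq a with h | h
      · exact Finset.mem_union_left _ (Finset.mem_image.mpr ⟨a.natAbs, hmem, h.symm⟩)
      · exact Finset.mem_union_right _ (Finset.mem_image.mpr ⟨a.natAbs, hmem, h.symm⟩)
    have hroot : y ∈ R a := by
      rw [hR]
      simp only [Multiset.mem_toFinset]
      rw [Polynomial.mem_roots (hne a ha0)]
      show (P a).IsRoot y
      rw [hP]
      simp only [IsRoot, eval_sub, eval_pow, eval_add, eval_X, eval_C]
      have : y + a = x := by omega
      rw [this, hxy]; ring
    refine Finset.mem_coe.mpr (Finset.mem_biUnion.mpr ⟨a, haD, Finset.mem_image.mpr ⟨y, hroot, ?_⟩⟩)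
    have hya : y + a = x := by omega
    simp [hya]
  have hTcard : T.card ≤ 2 * (d - 1) * m.natAbs.divisors.card := by
    apply le_trans (Finset.card_biUnion_le)
    calc ∑ a ∈ D, ((R a).image (fun y => (y + a, y))).card
        ≤ ∑ a ∈ D, (d - 1) := by
          apply Finset.sum_le_sum
          intro a _
          exact le_trans (Finset.card_image_le) (hRcard a)
      _ = D.card * (d - 1) := by rw [Finset.sum_const, smul_eq_mul]
      _ ≤ 2 * m.natAbs.divisors.card * (d - 1) := Nat.mul_le_mul_right _ hDcard
      _ = 2 * (d - 1) * m.natAbs.divisors.card := by ring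
  refine ⟨Set.Finite.subset T.finite_toSet hsub, ?_⟩
  calc ({p : ℤ × ℤ | p.1 ^ d - p.2 ^ d = m}).ncard
      ≤ (↑T : Set (ℤ × ℤ)).ncard := Set.ncard_le_ncard hsub T.finite_toSet
    _ = T.card := Set.ncard_coe_finset T
    _ ≤ 2 * (d - 1) * m.natAbs.divisors.card := hTcard
/-- For `d ≥ 2` and a nonzero integer `m`, the equation `x^d - y^d = m` has at most
`2 (d-1) τ(|m|)` solutions `(x,y) ∈ ℤ²`, where `τ` is the number-of-divisors function;
in particular, for every `ε > 0` the number of solutions is `≤ K |m|^ε` with `K`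
depending only on `d` and `ε`. -/
theorem count_solutions_xd_sub_yd
    (d : ℕ) (hd : 2 ≤ d) :
    (∀ m : ℤ, m ≠ 0 →
      ({p : ℤ × ℤ | p.1 ^ d - p.2 ^ d = m}).Finite ∧
      ({p : ℤ × ℤ | p.1 ^ d - p.2 ^ d = m}).ncard ≤
        2 * (d - 1) * m.natAbs.divisors.card) ∧
    (∀ ε : ℝ, 0 < ε → ∃ K : ℝ, ∀ m : ℤ, m ≠ 0 →
      (({p : ℤ × ℤ | p.1 ^ d - p.2 ^ d = m}).ncard : ℝ) ≤ K * (|m| : ℝ) ^ ε) := by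
  refine ⟨fun m hm => count_main d hd m hm, fun ε hε => ?_⟩
  obtain ⟨K₀, hK₀, hK⟩ := divisor_bound ε hε
  refine ⟨(2 * (d - 1) : ℕ) * K₀, fun m hm => ?_⟩
  have hn : m.natAbs ≠ 0 := Int.natAbs_ne_zero.mpr hm
  have h1 := (count_main d hd m hm).2
  have h2 := hK m.natAbs hn
  have habs : |(m : ℝ)| = (m.natAbs : ℝ) := by
    rw [← Int.cast_abs]
    exact congrArg (Int.cast : ℤ → ℝ) (Int.abs_eq_natAbs m)
  have h3 : (({p : ℤ × ℤ | p.1 ^ d - p.2 ^ d = m}).ncard : ℝ) ≤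
      (2 * (d - 1) : ℕ) * (m.natAbs.divisors.card : ℝ) := by
    have := h1
    push_cast
    exact_mod_cast Nat.cast_le.mpr (by exact_mod_cast this)
  calc (({p : ℤ × ℤ | p.1 ^ d - p.2 ^ d = m}).ncard : ℝ)
      ≤ (2 * (d - 1) : ℕ) * (m.natAbs.divisors.card : ℝ) := h3
    _ ≤ (2 * (d - 1) : ℕ) * (K₀ * (m.natAbs : ℝ) ^ ε) :=
        mul_le_mul_of_nonneg_left h2 (by positivity)
    _ = (2 * (d - 1) : ℕ) * K₀ * |(m : ℝ)| ^ ε := by rw [habs]; ring
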